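/- Let (V, ≺) be a finite linearly ordered set containing eight distinct elements l₁ ≺ w₁ ≺ w₂ ≺ r₁ ≺ l₂ ≺ w₃ ≺ w₄ ≺ r₂. Let P be a set of unordered pairs of elements of V consisting of the six pairs {l₁,w₁}, {w₂,r₁}, {l₂,w₃}, {w₄,r₂}, {w₁,w₄}, {w₂,w₃}, together with arbitrary further pairs {a,b} each of which satisfies one of: both a,b ⪯ l₁; both r₁ ⪯ a,b ⪯ l₂; both r₂ ⪯ a,b. Let x, y ∈ V with l₁ ≺ x ≺ r₁ and l₂ ≺ y ≺ r₂, where x and y are distinct from every element occurring in a pair of P. Then no pair of P alternates with {x,y} (i.e., for no pair {a,b} ∈ P with a ≺ b does a ≺ x ≺ b ≺ y or x ≺ a ≺ y ≺ b hold) if and only if w₁ ≺ x ≺ w₂ and w₃ ≺ y ≺ w₄. -/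
import Mathlib

def SymAlt {V : Type*} [LinearOrder V] (e f : Sym2 V) : Prop :=
  ∃ a b c d : V, e = s(a, c) ∧ f = s(b, d) ∧ a < b ∧ b < c ∧ c < d

lemma symAlt_iff {V : Type*} [LinearOrder V] {u v p q : V} (huv : u < v) (hpq : p < q) :
    SymAlt s(u, v) s(p, q) ↔ u < p ∧ p < v ∧ v < q := by
  constructor
  · rintro ⟨a, b, c, d, he, hf, hab, hbc, hcd⟩
    rw [Sym2.eq_iff] at he hf
    rcases he with ⟨rfl, rfl⟩ | ⟨rfl, rfl⟩
    · rcases hf with ⟨rfl, rfl⟩ | ⟨rfl, rfl⟩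
      · exact ⟨hab, hbc, hcd⟩
      · exact absurd (hbc.trans hcd) (not_lt.2 hpq.le)
    · exact absurd (hab.trans hbc) (not_lt.2 huv.le)
  · rintro ⟨h1, h2, h3⟩
    exact ⟨u, p, v, q, rfl, rfl, h1, h2, h3⟩

lemma not_alt_region {V : Type*} [LinearOrder V] {x y a b : V} (hxy : x < y)
    (h : (a < x ∧ b < x) ∨ (x < a ∧ a < y ∧ x < b ∧ b < y) ∨ (y < a ∧ y < b)) :
    ¬ SymAlt s(a, b) s(x, y) ∧ ¬ SymAlt s(x, y) s(a, b) := by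
  rcases lt_trichotomy a b with hab | rfl | hab
  · constructor
    · rw [symAlt_iff hab hxy]
      rintro ⟨g1, g2, g3⟩
      rcases h with ⟨c1, c2⟩ | ⟨c1, c2, c3, c4⟩ | ⟨c1, c2⟩
      · exact absurd g2 (not_lt.2 c2.le)
      · exact absurd g1 (not_lt.2 c1.le)
      · exact absurd g1 (not_lt.2 (hxy.le.trans c1.le))
    · rw [symAlt_iff hxy hab]
      rintro ⟨g1, g2, g3⟩
      rcases h with ⟨c1, c2⟩ | ⟨c1, c2, c3, c4⟩ | ⟨c1, c2⟩
      · exact absurd g1 (not_lt.2 c1.le)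
      · exact absurd g3 (not_lt.2 c4.le)
      · exact absurd g2 (not_lt.2 c1.le)
  · constructor
    · rintro ⟨p, q, r, s, he, hf, h1, h2, h3⟩
      rw [Sym2.eq_iff] at he
      rcases he with ⟨rfl, rfl⟩ | ⟨rfl, rfl⟩ <;> exact absurd (h1.trans h2) (lt_irrefl _)
    · rintro ⟨p, q, r, s, he, hf, h1, h2, h3⟩
      rw [Sym2.eq_iff] at hf
      rcases hf with ⟨rfl, rfl⟩ | ⟨rfl, rfl⟩ <;> exact absurd (h2.trans h3) (lt_irrefl _)
  · rw [Sym2.eq_swap (a := a)] at *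
    constructor
    · rw [symAlt_iff hab hxy]
      rintro ⟨g1, g2, g3⟩
      rcases h with ⟨c1, c2⟩ | ⟨c1, c2, c3, c4⟩ | ⟨c1, c2⟩
      · exact absurd g2 (not_lt.2 c1.le)
      · exact absurd g1 (not_lt.2 c3.le)
      · exact absurd g1 (not_lt.2 (hxy.le.trans c2.le))
    · rw [symAlt_iff hxy hab]
      rintro ⟨g1, g2, g3⟩
      rcases h with ⟨c1, c2⟩ | ⟨c1, c2, c3, c4⟩ | ⟨c1, c2⟩
      · exact absurd g1 (not_lt.2 c2.le)
      · exact absurd g3 (not_lt.2 c2.le)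
      · exact absurd g2 (not_lt.2 c2.le)

theorem stmt8 {V : Type*} [LinearOrder V] [Fintype V]
    (l₁ w₁ w₂ r₁ l₂ w₃ w₄ r₂ : V)
    (h₁ : l₁ < w₁) (h₂ : w₁ < w₂) (h₃ : w₂ < r₁) (h₄ : r₁ < l₂)
    (h₅ : l₂ < w₃) (h₆ : w₃ < w₄) (h₇ : w₄ < r₂)
    (P : Set (Sym2 V))
    (hm₁ : s(l₁, w₁) ∈ P) (hm₂ : s(w₂, r₁) ∈ P) (hm₃ : s(l₂, w₃) ∈ P)
    (hm₄ : s(w₄, r₂) ∈ P) (hm₅ : s(w₁, w₄) ∈ P) (hm₆ : s(w₂, w₃) ∈ P)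
    (hP : ∀ e ∈ P, e = s(l₁, w₁) ∨ e = s(w₂, r₁) ∨ e = s(l₂, w₃) ∨ e = s(w₄, r₂) ∨
      e = s(w₁, w₄) ∨ e = s(w₂, w₃) ∨
      ∃ a b : V, e = s(a, b) ∧
        ((a ≤ l₁ ∧ b ≤ l₁) ∨ (r₁ ≤ a ∧ a ≤ l₂ ∧ r₁ ≤ b ∧ b ≤ l₂) ∨ (r₂ ≤ a ∧ r₂ ≤ b)))
    (x y : V) (hx₁ : l₁ < x) (hx₂ : x < r₁) (hy₁ : l₂ < y) (hy₂ : y < r₂)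
    (hxy : ∀ e ∈ P, ∀ z ∈ e, z ≠ x ∧ z ≠ y) :
    (∀ e ∈ P, ¬ SymAlt e s(x, y) ∧ ¬ SymAlt s(x, y) e) ↔
      (w₁ < x ∧ x < w₂ ∧ w₃ < y ∧ y < w₄) := by
  have hxy' : x < y := hx₂.trans (h₄.trans hy₁)
  constructor
  · intro h
    have hxw1 : w₁ ≠ x := (hxy _ hm₁ w₁ (by simp)).1
    have hxw2 : w₂ ≠ x := (hxy _ hm₂ w₂ (by simp)).1
    have hyw3 : w₃ ≠ y := (hxy _ hm₃ w₃ (by simp)).2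
    have hyw4 : w₄ ≠ y := (hxy _ hm₄ w₄ (by simp)).2
    refine ⟨?_, ?_, ?_, ?_⟩
    · rcases lt_or_gt_of_ne hxw1 with h' | h'
      · exact h'
      · exact absurd ((symAlt_iff h₁ hxy').mpr
          ⟨hx₁, h', h₂.trans (h₃.trans (h₄.trans hy₁))⟩) (h _ hm₁).1
    · rcases lt_or_gt_of_ne hxw2 with h' | h'
      · exact absurd ((symAlt_iff h₃ hxy').mpr ⟨h', hx₂, h₄.trans hy₁⟩) (h _ hm₂).1
      · exact h'
    · rcases lt_or_gt_of_ne hyw3 with h' | h'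
      · exact h'
      · exact absurd ((symAlt_iff hxy' h₅).mpr ⟨hx₂.trans h₄, hy₁, h'⟩) (h _ hm₃).2
    · rcases lt_or_gt_of_ne hyw4 with h' | h'
      · exact absurd ((symAlt_iff hxy' h₇).mpr
          ⟨(hx₂.trans h₄).trans (h₅.trans h₆), h', hy₂⟩) (h _ hm₄).2
      · exact h'
  · rintro ⟨g1, g2, g3, g4⟩ e he
    have hw2y : w₂ < y := h₃.trans (h₄.trans hy₁)
    have hxw3 : x < w₃ := hx₂.trans (h₄.trans h₅)
    rcases hP e he with h' | h' | h' | h' | h' | h' | ⟨a, b, h', hr⟩ <;> subst h'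
    · exact not_alt_region hxy' (Or.inl ⟨h₁.trans g1, g1⟩)
    · exact not_alt_region hxy' (Or.inr (Or.inl ⟨g2, hw2y, hx₂, h₄.trans hy₁⟩))
    · exact not_alt_region hxy' (Or.inr (Or.inl ⟨hx₂.trans h₄, hy₁, hxw3, g3⟩))
    · exact not_alt_region hxy' (Or.inr (Or.inr ⟨g4, hy₂⟩))
    · constructor
      · rw [symAlt_iff (h₂.trans (h₃.trans (h₄.trans (h₅.trans h₆)))) hxy']
        rintro ⟨-, -, g⟩
        exact absurd g (not_lt.2 g4.le)
      · rw [symAlt_iff hxy' (h₂.trans (h₃.trans (h₄.trans (h₅.trans h₆))))]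
        rintro ⟨g, -, -⟩
        exact absurd g (not_lt.2 g1.le)
    · exact not_alt_region hxy' (Or.inr (Or.inl ⟨g2, hw2y, hxw3, g3⟩))
    · refine not_alt_region hxy' ?_
      rcases hr with ⟨c1, c2⟩ | ⟨c1, c2, c3, c4⟩ | ⟨c1, c2⟩
      · exact Or.inl ⟨c1.trans_lt hx₁, c2.trans_lt hx₁⟩
      · exact Or.inr (Or.inl ⟨hx₂.trans_le c1, c2.trans_lt hy₁, hx₂.trans_le c3,
          c4.trans_lt hy₁⟩)
      · exact Or.inr (Or.inr ⟨hy₂.trans_le c1, hy₂.trans_le c2⟩)
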